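/- An integral domain R is a cancellation domain (for all nonzero ideals I₁, I₂, J of R, I₁ · J = I₂ · J implies I₁ = I₂) if and only if R is an almost Dedekind domain, i.e., for every nonzero maximal ideal 𝔪 of R the localization of R at 𝔪 is a discrete valuation ring. -/

import Mathlib

open Ideal

set_option maxHeartbeats 1000000

section GilmerAux

variable {R : Type*} [CommRing R] [IsDomain R]

private lemma span_ne_bot {s : Set R} {x : R} (hx : x ∈ s) (h0 : x ≠ 0) :
    Ideal.span s ≠ ⊥ :=
  fun h => h0 (Ideal.span_eq_bot.mp h x hx)

/-- Key consequence of the cancellation property: for nonzero `a b` there are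
`e f r s` with `e + f = 1`, `r * a = b * e`, `s * b = a * f`. -/
private lemma key_ef
    (hc : ∀ I₁ I₂ J : Ideal R, I₁ ≠ ⊥ → I₂ ≠ ⊥ → J ≠ ⊥ → I₁ * J = I₂ * J → I₁ = I₂)
    {a b : R} (ha : a ≠ 0) (hb : b ≠ 0) :
    ∃ e f r s : R, e + f = 1 ∧ r * a = b * e ∧ s * b = a * f := by
  have ha2 : a ^ 2 ≠ 0 := pow_ne_zero 2 ha
  -- Step 1 : (a², ab, b²)·(a,b) = (a²,b²)·(a,b)
  have hX : (Ideal.span {a ^ 2, a * b, b ^ 2} : Ideal R) * Ideal.span {a, b}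
      = Ideal.span {a ^ 2, b ^ 2} * Ideal.span {a, b} := by
    have hu : ({a ^ 2, a * b, b ^ 2} : Set R) = {a ^ 2, a * b} ∪ {a * b, b ^ 2} := by
      ext x; simp; tauto
    rw [hu, Ideal.span_union, Ideal.sup_mul, Ideal.span_pair_mul_span_pair,
      Ideal.span_pair_mul_span_pair, Ideal.span_pair_mul_span_pair]
    refine le_antisymm (sup_le ?_ ?_) ?_
    · rw [Ideal.span_le]
      rintro x hx
      simp only [Set.mem_insert_iff, Set.mem_singleton_iff] at hx
      rcases hx with rfl | rfl | rfl | rfl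
      · exact Ideal.subset_span (by simp)
      · exact Ideal.subset_span (by simp)
      · rw [show a * b * a = a ^ 2 * b by ring]
        exact Ideal.subset_span (by simp)
      · rw [show a * b * b = b ^ 2 * a by ring]
        exact Ideal.subset_span (by simp)
    · rw [Ideal.span_le]
      rintro x hx
      simp only [Set.mem_insert_iff, Set.mem_singleton_iff] at hx
      rcases hx with rfl | rfl | rfl | rfl
      · rw [show a * b * a = a ^ 2 * b by ring]
        exact Ideal.subset_span (by simp)
      · rw [show a * b * b = b ^ 2 * a by ring]
        exact Ideal.subset_span (by simp)
      · exact Ideal.subset_span (by simp)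
      · exact Ideal.subset_span (by simp)
    · rw [Ideal.span_le]
      rintro x hx
      simp only [Set.mem_insert_iff, Set.mem_singleton_iff] at hx
      rcases hx with rfl | rfl | rfl | rfl
      · exact Ideal.mem_sup_left (Ideal.subset_span (by simp))
      · exact Ideal.mem_sup_left (Ideal.subset_span (by simp))
      · exact Ideal.mem_sup_right (Ideal.subset_span (by simp))
      · exact Ideal.mem_sup_right (Ideal.subset_span (by simp))
  have hsq : (Ideal.span {a ^ 2, a * b, b ^ 2} : Ideal R) = Ideal.span {a ^ 2, b ^ 2} :=
    hc _ _ _ (span_ne_bot (by simp) ha2) (span_ne_bot (by simp) ha2) (span_ne_bot (by simp) ha) hX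
  have hmem : a * b ∈ (Ideal.span {a ^ 2, b ^ 2} : Ideal R) := by
    rw [← hsq]; exact Ideal.subset_span (by simp)
  obtain ⟨r, s, hrs⟩ := Ideal.mem_span_pair.mp hmem
  -- Step 2 : (b, ra)² = (b)·(b, ra), hence b ∣ ra
  have hID1 : (Ideal.span {b, r * a} : Ideal R) * Ideal.span {b, r * a}
      = Ideal.span {b} * Ideal.span {b, r * a} := by
    rw [show (Ideal.span {b} : Ideal R) = Ideal.span {b, b} by rw [Set.pair_eq_singleton],
      Ideal.span_pair_mul_span_pair, Ideal.span_pair_mul_span_pair]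
    have hdup : ({b * b, b * (r * a), b * b, b * (r * a)} : Set R) = {b * b, b * (r * a)} := by
      ext x; simp
    rw [hdup]
    refine le_antisymm ?_ ?_
    · rw [Ideal.span_le]
      rintro x hx
      simp only [Set.mem_insert_iff, Set.mem_singleton_iff] at hx
      rcases hx with rfl | rfl | rfl | rfl
      · exact Ideal.subset_span (by simp)
      · exact Ideal.subset_span (by simp)
      · rw [show r * a * b = b * (r * a) by ring]
        exact Ideal.subset_span (by simp)
      · exact Ideal.mem_span_pair.mpr ⟨-(r * s), 1, by linear_combination (-r) * hrs⟩
    · rw [Ideal.span_le]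
      rintro x hx
      simp only [Set.mem_insert_iff, Set.mem_singleton_iff] at hx
      rcases hx with rfl | rfl
      · exact Ideal.subset_span (by simp)
      · exact Ideal.subset_span (by simp)
  have hbra : (Ideal.span {b, r * a} : Ideal R) = Ideal.span {b} :=
    hc _ _ _ (span_ne_bot (by simp) hb) (span_ne_bot (by simp) hb) (span_ne_bot (by simp) hb) hID1
  have hra : r * a ∈ (Ideal.span {b} : Ideal R) := by
    rw [← hbra]; exact Ideal.subset_span (by simp)
  obtain ⟨e, he⟩ := Ideal.mem_span_singleton.mp hra
  -- Step 3 : (a, sb)² = (a)·(a, sb), hence a ∣ sb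
  have hID2 : (Ideal.span {a, s * b} : Ideal R) * Ideal.span {a, s * b}
      = Ideal.span {a} * Ideal.span {a, s * b} := by
    rw [show (Ideal.span {a} : Ideal R) = Ideal.span {a, a} by rw [Set.pair_eq_singleton],
      Ideal.span_pair_mul_span_pair, Ideal.span_pair_mul_span_pair]
    have hdup : ({a * a, a * (s * b), a * a, a * (s * b)} : Set R) = {a * a, a * (s * b)} := by
      ext x; simp
    rw [hdup]
    refine le_antisymm ?_ ?_
    · rw [Ideal.span_le]
      rintro x hx
      simp only [Set.mem_insert_iff, Set.mem_singleton_iff] at hx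
      rcases hx with rfl | rfl | rfl | rfl
      · exact Ideal.subset_span (by simp)
      · exact Ideal.subset_span (by simp)
      · rw [show s * b * a = a * (s * b) by ring]
        exact Ideal.subset_span (by simp)
      · exact Ideal.mem_span_pair.mpr ⟨-(r * s), 1, by linear_combination (-s) * hrs⟩
    · rw [Ideal.span_le]
      rintro x hx
      simp only [Set.mem_insert_iff, Set.mem_singleton_iff] at hx
      rcases hx with rfl | rfl
      · exact Ideal.subset_span (by simp)
      · exact Ideal.subset_span (by simp)
  have hasb : (Ideal.span {a, s * b} : Ideal R) = Ideal.span {a} :=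
    hc _ _ _ (span_ne_bot (by simp) ha) (span_ne_bot (by simp) ha) (span_ne_bot (by simp) ha) hID2
  have hsb : s * b ∈ (Ideal.span {a} : Ideal R) := by
    rw [← hasb]; exact Ideal.subset_span (by simp)
  obtain ⟨f, hf⟩ := Ideal.mem_span_singleton.mp hsb
  refine ⟨e, f, r, s, ?_, he, hf⟩
  have hmul : (e + f) * (a * b) = 1 * (a * b) := by
    linear_combination (-a) * he + (-b) * hf + hrs
  exact mul_right_cancel₀ (mul_ne_zero ha hb) hmul

end GilmerAux

section GilmerLoc

variable {R : Type*} [CommRing R] [IsDomain R]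

private lemma unit_eq_dvd {L : Type*} [CommRing L] {x c u : L} (hu : IsUnit u)
    (h : x * u = c) : c ∣ x := by
  obtain ⟨v, rfl⟩ := hu
  exact ⟨↑v⁻¹, by rw [← h, mul_assoc, Units.mul_inv, mul_one]⟩

private lemma unit_eq_dvd' {L : Type*} [CommRing L] {a b r e : L} (hu : IsUnit e)
    (h : r * a = b * e) : a ∣ b := by
  obtain ⟨v, rfl⟩ := hu
  refine ⟨r * ↑v⁻¹, ?_⟩
  rw [show a * (r * ↑v⁻¹) = r * a * ↑v⁻¹ from by ring, h, mul_assoc, Units.mul_inv, mul_one]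

/-- In a cancellation domain, divisibility in any localization at a maximal ideal is total. -/
private lemma dvd_total_loc
    (hc : ∀ I₁ I₂ J : Ideal R, I₁ ≠ ⊥ → I₂ ≠ ⊥ → J ≠ ⊥ → I₁ * J = I₂ * J → I₁ = I₂)
    (M : Ideal R) (hM : M.IsMaximal) (x y : Localization.AtPrime M) : x ∣ y ∨ y ∣ x := by
  haveI := hM.isPrime
  obtain ⟨⟨a, sa⟩, hxa⟩ := IsLocalization.surj M.primeCompl x
  obtain ⟨⟨b, sb⟩, hyb⟩ := IsLocalization.surj M.primeCompl y
  have hua : IsUnit (algebraMap R (Localization.AtPrime M) (sa : R)) := IsLocalization.map_units (Localization.AtPrime M) sa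
  have hub : IsUnit (algebraMap R (Localization.AtPrime M) (sb : R)) := IsLocalization.map_units (Localization.AtPrime M) sb
  have hxdva : x ∣ algebraMap R (Localization.AtPrime M) a := ⟨algebraMap R (Localization.AtPrime M) (sa : R), hxa.symm⟩
  have hadx : algebraMap R (Localization.AtPrime M) a ∣ x := unit_eq_dvd hua hxa
  have hydvb : y ∣ algebraMap R (Localization.AtPrime M) b := ⟨algebraMap R (Localization.AtPrime M) (sb : R), hyb.symm⟩
  have hbdy : algebraMap R (Localization.AtPrime M) b ∣ y := unit_eq_dvd hub hyb
  rcases eq_or_ne a 0 with rfl | ha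
  · right
    refine dvd_trans ?_ hadx
    rw [map_zero]
    exact dvd_zero _
  rcases eq_or_ne b 0 with rfl | hb
  · left
    refine dvd_trans ?_ hbdy
    rw [map_zero]
    exact dvd_zero _
  obtain ⟨e, f, r, s, hef, he, hf⟩ := key_ef hc ha hb
  have hefM : e ∉ M ∨ f ∉ M := by
    by_contra hcon
    push_neg at hcon
    have : (1 : R) ∈ M := by rw [← hef]; exact M.add_mem hcon.1 hcon.2
    exact hM.ne_top (Ideal.eq_top_of_isUnit_mem _ this isUnit_one)
  rcases hefM with heM | hfM
  · left
    have hue : IsUnit (algebraMap R (Localization.AtPrime M) e) := IsLocalization.map_units (Localization.AtPrime M) (⟨e, heM⟩ : M.primeCompl)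
    have h1 : algebraMap R (Localization.AtPrime M) r * algebraMap R (Localization.AtPrime M) a
        = algebraMap R (Localization.AtPrime M) b * algebraMap R (Localization.AtPrime M) e := by
      rw [← _root_.map_mul, ← _root_.map_mul, he]
    exact dvd_trans (dvd_trans hxdva (unit_eq_dvd' hue h1)) hbdy
  · right
    have huf : IsUnit (algebraMap R (Localization.AtPrime M) f) := IsLocalization.map_units (Localization.AtPrime M) (⟨f, hfM⟩ : M.primeCompl)
    have h1 : algebraMap R (Localization.AtPrime M) s * algebraMap R (Localization.AtPrime M) b
        = algebraMap R (Localization.AtPrime M) a * algebraMap R (Localization.AtPrime M) f := by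
      rw [← _root_.map_mul, ← _root_.map_mul, hf]
    exact dvd_trans (dvd_trans hydvb (unit_eq_dvd' huf h1)) hadx

/-- Cancelling a maximal ideal against an ideal whose localization absorbs it. -/
private lemma cancel_max
    (hc : ∀ I₁ I₂ J : Ideal R, I₁ ≠ ⊥ → I₂ ≠ ⊥ → J ≠ ⊥ → I₁ * J = I₂ * J → I₁ = I₂)
    {M Q : Ideal R} (hM : M.IsMaximal) (hM0 : M ≠ ⊥) (hQ : Q ≠ ⊥)
    (h : Ideal.map (algebraMap R (Localization.AtPrime M)) M *
          Ideal.map (algebraMap R (Localization.AtPrime M)) Q =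
        Ideal.map (algebraMap R (Localization.AtPrime M)) Q) : False := by
  haveI := hM.isPrime
  have hMQ : M * Q = Q := by
    apply Ideal.eq_of_localization_maximal
    intro P hP
    haveI := hP.isPrime
    by_cases hPM : P = M
    · subst hPM
      rw [Ideal.map_mul]
      exact h
    · have hex : ∃ x ∈ M, x ∉ P := by
        by_contra hcon
        push_neg at hcon
        exact hPM (hM.eq_of_le hP.ne_top hcon).symm
      obtain ⟨x, hxM, hxP⟩ := hex
      have hu : IsUnit (algebraMap R (Localization.AtPrime P) x) :=
        IsLocalization.map_units _ (⟨x, hxP⟩ : P.primeCompl)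
      have htop : Ideal.map (algebraMap R (Localization.AtPrime P)) M = ⊤ :=
        Ideal.eq_top_of_isUnit_mem _ (Ideal.mem_map_of_mem _ hxM) hu
      rw [Ideal.map_mul, htop, top_mul]
  have htne : (⊤ : Ideal R) ≠ ⊥ := fun h' => hM0 (le_bot_iff.mp (h' ▸ le_top))
  have := hc M ⊤ Q hM0 htne hQ (by rw [top_mul]; exact hMQ)
  exact hM.ne_top this

end GilmerLoc

section GilmerMain

variable {R : Type*} [CommRing R] [IsDomain R]

private lemma dvr_of_cancel
    (hc : ∀ I₁ I₂ J : Ideal R, I₁ ≠ ⊥ → I₂ ≠ ⊥ → J ≠ ⊥ → I₁ * J = I₂ * J → I₁ = I₂)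
    (M : Ideal R) (hM : M.IsMaximal) (hM0 : M ≠ ⊥) :
    IsDiscreteValuationRing (Localization.AtPrime M) := by
  classical
  haveI := hM.isPrime
  haveI : IsDomain (Localization.AtPrime M) :=
    IsLocalization.isDomain_of_local_atPrime (P := M) hM.isPrime
  set L := Localization.AtPrime M with hL
  set n : Ideal L := IsLocalRing.maximalIdeal L with hn
  have hmap : Ideal.map (algebraMap R L) M = n := Localization.AtPrime.map_eq_maximalIdeal
  have hinj : Function.Injective (algebraMap R L) :=
    IsLocalization.injective L M.primeCompl_le_nonZeroDivisors
  -- the maximal ideal of L is nonzero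
  have hnbot : n ≠ ⊥ := by
    obtain ⟨z, hzM, hz0⟩ := (Submodule.ne_bot_iff _).mp hM0
    refine (Submodule.ne_bot_iff _).mpr ⟨algebraMap R L z, ?_, ?_⟩
    · rw [← hmap]; exact Ideal.mem_map_of_mem _ hzM
    · intro h0
      exact hz0 (hinj (by rw [h0, map_zero]))
  -- the maximal ideal is not idempotent
  have hn2 : n * n ≠ n := by
    intro h
    refine cancel_max hc hM hM0 hM0 ?_
    rw [hmap, h]
  -- pick a generator
  obtain ⟨ϖ, hϖn, hϖ2⟩ := SetLike.exists_of_lt (lt_of_le_of_ne Ideal.mul_le_left hn2)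
  have hspan : n = Ideal.span {ϖ} := by
    refine le_antisymm ?_ ((Ideal.span_le).mpr (by simpa using hϖn))
    intro y hy
    rcases dvd_total_loc hc M hM ϖ y with hd | hd
    · exact Ideal.mem_span_singleton.mpr hd
    · obtain ⟨c, hcc⟩ := hd
      by_cases hcu : IsUnit c
      · obtain ⟨v, rfl⟩ := hcu
        refine Ideal.mem_span_singleton.mpr ⟨↑v⁻¹, ?_⟩
        rw [hcc, mul_assoc, Units.mul_inv, mul_one]
      · exact absurd (hcc ▸ Ideal.mul_mem_mul hy ((IsLocalRing.mem_maximalIdeal _).mpr hcu)) hϖ2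
  have hϖ0 : ϖ ≠ 0 := by
    rintro rfl
    apply hnbot
    rw [hspan, Ideal.span_singleton_eq_bot]
  -- intersection of powers is zero
  have hinter : ∀ x : L, (∀ k : ℕ, ϖ ^ k ∣ x) → x = 0 := by
    intro x hx
    set P : Ideal L := ⨅ k : ℕ, Ideal.span {ϖ ^ k} with hP
    have hmemP : ∀ z : L, z ∈ P ↔ ∀ k, ϖ ^ k ∣ z := by
      intro z
      simp [hP, Ideal.mem_iInf, Ideal.mem_span_singleton]
      exact forall_congr' fun k => Ideal.mem_span_singleton
    have hPn : n * P = P := by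
      refine le_antisymm Ideal.mul_le_right ?_
      intro z hz
      obtain ⟨w, hw⟩ := (hmemP z).mp hz 1
      rw [pow_one] at hw
      have hwP : w ∈ P := by
        refine (hmemP w).mpr fun k => ?_
        have h1 : ϖ * ϖ ^ k ∣ ϖ * w := by
          rw [← hw, show ϖ * ϖ ^ k = ϖ ^ (k + 1) from by ring]
          exact (hmemP z).mp hz (k + 1)
        exact (mul_dvd_mul_iff_left hϖ0).mp h1
      rw [hw]
      exact Ideal.mul_mem_mul (hspan ▸ Ideal.subset_span rfl) hwP
    set Q : Ideal R := Ideal.comap (algebraMap R L) P with hQ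
    have hQmap : Ideal.map (algebraMap R L) Q = P := IsLocalization.map_comap M.primeCompl L P
    by_cases hQ0 : Q = ⊥
    · have hPbot : P = ⊥ := by rw [← hQmap, hQ0, Ideal.map_bot]
      have hxP : x ∈ P := (hmemP x).mpr hx
      rw [hPbot] at hxP
      simpa using hxP
    · exact absurd (by rw [hmap, hQmap]; exact hPn) (fun h => cancel_max hc hM hM0 hQ0 h)
  -- ϖ is irreducible
  have hϖu : ¬IsUnit ϖ := hϖn
  have hirr : Irreducible ϖ := by
    refine ⟨hϖu, fun u v huv => ?_⟩
    by_contra hcon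
    push_neg at hcon
    obtain ⟨hu, hv⟩ := hcon
    have hun : u ∈ n := (IsLocalRing.mem_maximalIdeal _).mpr hu
    have hvn : v ∈ n := (IsLocalRing.mem_maximalIdeal _).mpr hv
    obtain ⟨u', hu'⟩ := Ideal.mem_span_singleton.mp (hspan ▸ hun)
    obtain ⟨v', hv'⟩ := Ideal.mem_span_singleton.mp (hspan ▸ hvn)
    have : ϖ * 1 = ϖ * (ϖ * (u' * v')) := by
      linear_combination huv + v * hu' + (ϖ * u') * hv'
    have h1 : (1 : L) = ϖ * (u' * v') := mul_left_cancel₀ hϖ0 this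
    exact hϖu (IsUnit.of_mul_eq_one _ h1.symm)
  -- every nonzero element is a unit times a power of ϖ
  refine IsDiscreteValuationRing.ofHasUnitMulPowIrreducibleFactorization ⟨ϖ, hirr, ?_⟩
  intro x hx
  have hex : ∃ k, ¬ ϖ ^ k ∣ x := by
    by_contra hcon
    push_neg at hcon
    exact hx (hinter x hcon)
  have hk0 : Nat.find hex ≠ 0 := by
    intro h0
    have := Nat.find_spec hex
    rw [h0, pow_zero] at this
    exact this (one_dvd x)
  obtain ⟨k, hk⟩ := Nat.exists_eq_succ_of_ne_zero hk0
  have hdvd : ϖ ^ k ∣ x := by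
    by_contra hnd
    exact Nat.find_min hex (by omega : k < Nat.find hex) hnd
  obtain ⟨u, hu⟩ := hdvd
  have hnu : ¬ ϖ ∣ u := by
    intro ⟨w, hw⟩
    apply Nat.find_spec hex
    rw [hk, hu, hw, pow_succ]
    exact ⟨w, by ring⟩
  have huu : IsUnit u := by
    by_contra hcon
    exact hnu (Ideal.mem_span_singleton.mp (hspan ▸ (IsLocalRing.mem_maximalIdeal _).mpr hcon))
  exact ⟨k, huu.unit, by rw [IsUnit.unit_spec, hu]⟩

end GilmerMain

/-- An integral domain R is a cancellation domain (I₁ * J = I₂ * J implies I₁ = I₂ for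
all nonzero ideals I₁, I₂, J) iff R is an almost Dedekind domain (for every nonzero
maximal ideal 𝔪 the localization of R at 𝔪 is a discrete valuation ring). -/
theorem stmt19 (R : Type*) [CommRing R] [IsDomain R] :
    (∀ I₁ I₂ J : Ideal R, I₁ ≠ ⊥ → I₂ ≠ ⊥ → J ≠ ⊥ → I₁ * J = I₂ * J → I₁ = I₂) ↔
      (∀ (m : Ideal R) (hm : m.IsMaximal), m ≠ ⊥ →
        IsDiscreteValuationRing (@Localization.AtPrime R _ m hm.isPrime)) := by
  constructor
  · intro hc m hm hm0
    exact dvr_of_cancel hc m hm hm0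
  · intro hd I₁ I₂ J h1 h2 hJ heq
    by_cases hf : IsField R
    · have htop : ∀ I : Ideal R, I ≠ ⊥ → I = ⊤ := by
        intro I hI
        obtain ⟨x, hxI, hx0⟩ := (Submodule.ne_bot_iff _).mp hI
        obtain ⟨y, hy⟩ := hf.mul_inv_cancel hx0
        exact Ideal.eq_top_of_isUnit_mem _ hxI (IsUnit.of_mul_eq_one _ hy)
      rw [htop I₁ h1, htop I₂ h2]
    · apply Ideal.eq_of_localization_maximal
      intro P hP
      haveI := hP.isPrime
      have hP0 : P ≠ ⊥ := by
        rintro rfl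
        refine hf ⟨exists_pair_ne R, mul_comm, ?_⟩
        intro x hx
        have hlt : (⊥ : Ideal R) < Ideal.span {x} := by
          rw [bot_lt_iff_ne_bot, Ne, Ideal.span_singleton_eq_bot]
          exact hx
        have htop := hP.1.2 _ hlt
        obtain ⟨y, hy⟩ := (Ideal.span_singleton_eq_top.mp htop).exists_right_inv
        exact ⟨y, hy⟩
      haveI hdvr := hd P hP hP0
      haveI : IsDomain (Localization.AtPrime P) :=
        IsLocalization.isDomain_of_local_atPrime (P := P) hP.isPrime
      have hJ' : Ideal.map (algebraMap R (Localization.AtPrime P)) J ≠ ⊥ := by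
        have hinj : Function.Injective (algebraMap R (Localization.AtPrime P)) :=
          IsLocalization.injective _ P.primeCompl_le_nonZeroDivisors
        obtain ⟨x, hxJ, hx0⟩ := (Submodule.ne_bot_iff _).mp hJ
        refine (Submodule.ne_bot_iff _).mpr ⟨algebraMap R _ x, Ideal.mem_map_of_mem _ hxJ, ?_⟩
        intro h0
        exact hx0 (hinj (by rw [h0, map_zero]))
      have hprod : Ideal.map (algebraMap R (Localization.AtPrime P)) I₁ *
            Ideal.map (algebraMap R (Localization.AtPrime P)) J =
          Ideal.map (algebraMap R (Localization.AtPrime P)) I₂ *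
            Ideal.map (algebraMap R (Localization.AtPrime P)) J := by
        rw [← Ideal.map_mul, ← Ideal.map_mul, heq]
      have hJ0 : Ideal.map (algebraMap R (Localization.AtPrime P)) J ≠ 0 := by
        rw [Ideal.zero_eq_bot]; exact hJ'
      exact mul_right_cancel₀ hJ0 hprod
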